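/- arXiv:1710.08027 — 2 statements merged into one kernel-verified Lean document; each statement's English description precedes it below -/
import Mathlib

section
/- There exists a constant C > 0 such that for every integer p ≥ 2, setting N = ⌈20·log_{8/7} p⌉, the binomial tail sum ∑_{j=0}^{N} 1[j > 19·log_{8/7} p] · C(N,j) · (1/4)^j · (3/4)^{N−j} is at most C·p^{−7}. (In words: if N independent trials each fail with probability 1/4, the probability that more than 19·log_{8/7} p of them fail is O(p^{−7}).) -/
/-- There exists a constant `C > 0` such that for every integer `p ≥ 2`, setting
`N = ⌈20·log_{8/7} p⌉`, the binomial tail sum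
`∑_{j=0}^{N} 1[j > 19·log_{8/7} p] · C(N,j) · (1/4)^j · (3/4)^(N−j)`
is at most `C·p^(−7)`. -/
theorem stmt_0 :
    ∃ C : ℝ, 0 < C ∧ ∀ p : ℕ, 2 ≤ p →
      (∑ j ∈ Finset.range (⌈20 * Real.logb (8/7) p⌉₊ + 1),
        (if 19 * Real.logb (8/7) p < (j : ℝ) then
          ((⌈20 * Real.logb (8/7) p⌉₊).choose j : ℝ) * (1/4 : ℝ) ^ j *
            (3/4 : ℝ) ^ (⌈20 * Real.logb (8/7) p⌉₊ - j)
        else 0))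
      ≤ C * (p : ℝ) ^ (-7 : ℤ) := by
  refine ⟨3/2, by norm_num, fun p hp => ?_⟩
  have hp0 : (0:ℝ) < p := Nat.cast_pos.mpr (by omega)
  have hp1 : (1:ℝ) ≤ p := by exact_mod_cast (by omega : 1 ≤ p)
  set L := Real.logb (8/7) (p:ℝ) with hLdef
  have hL0 : 0 ≤ L := Real.logb_nonneg (by norm_num) hp1
  set N := ⌈20 * L⌉₊ with hNdef
  have key : ∀ j ∈ Finset.range (N+1),
      (if 19 * L < (j:ℝ) then (N.choose j : ℝ) * (1/4:ℝ)^j * (3/4:ℝ)^(N-j) else 0)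
      ≤ (3:ℝ)^(-(19*L)) * (3/4:ℝ)^N * (N.choose j : ℝ) := by
    intro j hj
    have hjN : j ≤ N := Nat.lt_succ_iff.mp (Finset.mem_range.mp hj)
    split_ifs with h
    · have h1 : ((3:ℝ)^j)⁻¹ ≤ (3:ℝ)^(-(19*L)) := by
        rw [← Real.rpow_natCast 3 j, ← Real.rpow_neg (by norm_num)]
        exact (Real.rpow_le_rpow_left_iff (by norm_num)).mpr (by linarith)
      have h2 : (N.choose j : ℝ) * (1/4:ℝ)^j * (3/4:ℝ)^(N-j)
          = ((3:ℝ)^j)⁻¹ * (3/4:ℝ)^N * (N.choose j : ℝ) := by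
        have h34 : (3/4:ℝ)^N = (3/4:ℝ)^j * (3/4:ℝ)^(N-j) := by
          rw [← pow_add, Nat.add_sub_cancel' hjN]
        rw [h34]
        have : (1/4:ℝ)^j = ((3:ℝ)^j)⁻¹ * (3/4:ℝ)^j := by
          rw [← inv_pow, ← mul_pow]; norm_num
        rw [this]; ring
      rw [h2]
      have hc : (0:ℝ) ≤ (N.choose j : ℝ) := by positivity
      have hb : (0:ℝ) ≤ (3/4:ℝ)^N := by positivity
      exact mul_le_mul_of_nonneg_right (mul_le_mul_of_nonneg_right h1 hb) hc
    · positivity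
  have hsum := Finset.sum_le_sum key
  refine hsum.trans ?_
  have hsum2 : ∑ j ∈ Finset.range (N+1), (3:ℝ)^(-(19*L)) * (3/4:ℝ)^N * (N.choose j : ℝ)
      = (3:ℝ)^(-(19*L)) * (3/2:ℝ)^N := by
    rw [← Finset.mul_sum]
    have hchoose : ∑ j ∈ Finset.range (N+1), (N.choose j : ℝ) = 2^N := by
      exact_mod_cast Nat.sum_range_choose N
    rw [hchoose, mul_assoc, ← mul_pow]
    norm_num
  rw [hsum2]
  -- Now bound (3)^(-(19L)) * (3/2)^N ≤ 3/2 * p^(-7)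
  have hN1 : (N:ℝ) ≤ 20*L + 1 := le_of_lt (Nat.ceil_lt_add_one (by positivity))
  have h32 : ((3:ℝ)/2)^N ≤ (3/2:ℝ)^(20*L+1 : ℝ) := by
    rw [← Real.rpow_natCast (3/2) N]
    exact Real.rpow_le_rpow_of_exponent_le (by norm_num) hN1
  have h3pos : (0:ℝ) < (3:ℝ)^(-(19*L)) := Real.rpow_pos_of_pos (by norm_num) _
  have hstep : (3:ℝ)^(-(19*L)) * (3/2:ℝ)^N ≤ (3:ℝ)^(-(19*L)) * (3/2:ℝ)^(20*L+1 : ℝ) :=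
    mul_le_mul_of_nonneg_left h32 h3pos.le
  refine hstep.trans ?_
  have hsplit : (3/2:ℝ)^(20*L+1 : ℝ) = (3/2:ℝ)^(20*L : ℝ) * (3/2) := by
    rw [Real.rpow_add (by norm_num), Real.rpow_one]
  rw [hsplit]
  have hcomb : (3:ℝ)^(-(19*L)) * (3/2:ℝ)^(20*L : ℝ)
      = ((3:ℝ)^(-19:ℤ) * (3/2:ℝ)^(20:ℤ)) ^ L := by
    have e1 : (3:ℝ)^(-(19*L)) = ((3:ℝ)^((-19:ℤ):ℝ)) ^ L := by
      rw [← Real.rpow_mul (by norm_num : (0:ℝ) ≤ 3)]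
      norm_num
    have e2 : (3/2:ℝ)^(20*L : ℝ) = ((3/2:ℝ)^(((20:ℤ)):ℝ)) ^ L := by
      rw [← Real.rpow_mul (by norm_num : (0:ℝ) ≤ 3/2)]
      norm_num
    rw [e1, e2, ← Real.mul_rpow (by positivity) (by positivity),
      Real.rpow_intCast, Real.rpow_intCast]
  have hval : ((3:ℝ)^(-19:ℤ) * (3/2:ℝ)^(20:ℤ)) = 3 / 2^20 := by
    norm_num [zpow_neg]
  have hpL : ((8:ℝ)/7) ^ L = p := Real.rpow_logb (by norm_num) (by norm_num) hp0
  have hp7 : (p:ℝ)^(-7:ℤ) = ((7/8:ℝ)^(7:ℕ)) ^ L := by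
    rw [← hpL, ← Real.rpow_intCast (((8:ℝ)/7) ^ L) (-7), ← Real.rpow_mul (by norm_num),
      show L * ((-7:ℤ):ℝ) = ((-7:ℤ):ℝ) * L by ring,
      Real.rpow_mul (by norm_num : (0:ℝ) ≤ 8/7), Real.rpow_intCast]
    norm_num [zpow_neg]
  have hfinal : ((3:ℝ) / 2^20) ^ L ≤ ((7/8:ℝ)^(7:ℕ)) ^ L := by
    apply Real.rpow_le_rpow (by positivity) (by norm_num) hL0
  rw [hp7]
  calc (3:ℝ)^(-(19*L)) * ((3/2:ℝ)^(20*L : ℝ) * (3/2))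
      = ((3:ℝ)^(-(19*L)) * (3/2:ℝ)^(20*L : ℝ)) * (3/2) := by ring
    _ = (3 / 2 ^ 20 : ℝ) ^ L * (3/2) := by rw [hcomb, hval]
    _ ≤ ((7/8:ℝ)^(7:ℕ)) ^ L * (3/2) := mul_le_mul_of_nonneg_right hfinal (by norm_num)
    _ = 3/2 * ((7/8:ℝ)^(7:ℕ)) ^ L := by ring
end

section
/- There exists a constant C > 0 such that for every integer p ≥ 2, every probability space (Ω, μ), and every family of ℕ-valued random variables X_1, …, X_p on Ω, each of whose distribution (pushforward law under μ) is the binomial distribution with N = ⌈20·log_{8/7} p⌉ trials and success probability 1/4, the probability μ({ω : ∃ i ∈ {1,…,p}, X_i(ω) > 19·log_{8/7} p}) is at most C·p^{−6}. -/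
open MeasureTheory

lemma aux_choose_le_two_pow (n j : ℕ) : n.choose j ≤ 2 ^ n := by
  rcases le_or_gt j n with h | h
  · calc n.choose j ≤ ∑ m ∈ Finset.range (n + 1), n.choose m :=
        Finset.single_le_sum (fun _ _ => Nat.zero_le _)
          (Finset.mem_range.mpr (Nat.lt_succ_of_le h))
      _ = 2 ^ n := Nat.sum_range_choose n
  · rw [Nat.choose_eq_zero_of_lt h]; exact Nat.zero_le _

/-- There exists a constant `C > 0` such that for every integer `p ≥ 2`, every probability
space `(Ω, μ)`, and every family of `ℕ`-valued random variables `X_1, …, X_p` on `Ω`, each of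
whose distribution (pushforward law under `μ`) is the binomial distribution with
`N = ⌈20·log_{8/7} p⌉` trials and success probability `1/4`, the probability
`μ {ω | ∃ i, X i ω > 19·log_{8/7} p}` is at most `C·p^(−6)`. -/
theorem stmt_1 :
    ∃ C : ℝ, 0 < C ∧ ∀ p : ℕ, 2 ≤ p →
      ∀ (Ω : Type) (_ : MeasurableSpace Ω) (μ : Measure Ω), IsProbabilityMeasure μ →
      ∀ X : Fin p → Ω → ℕ, (∀ i, Measurable (X i)) →
      (∀ i (j : ℕ), μ.map (X i) {j} =
        ENNReal.ofReal
          (((⌈20 * Real.logb (8/7) p⌉₊).choose j : ℝ) * (1/4 : ℝ) ^ j *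
            (3/4 : ℝ) ^ (⌈20 * Real.logb (8/7) p⌉₊ - j))) →
      μ {ω | ∃ i : Fin p, 19 * Real.logb (8/7) p < (X i ω : ℝ)}
        ≤ ENNReal.ofReal (C * (p : ℝ) ^ (-6 : ℤ)) := by
  refine ⟨8/3, by norm_num, ?_⟩
  intro p hp Ω mΩ μ hμ X hX hmap
  set L : ℝ := Real.logb (8/7) p with hLdef
  set N : ℕ := ⌈20 * L⌉₊ with hNdef
  set k : ℕ := ⌈19 * L⌉₊ with hkdef
  have hp1 : (1:ℝ) < (p:ℝ) := by exact_mod_cast lt_of_lt_of_le one_lt_two hp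
  have hp0 : (0:ℝ) < (p:ℝ) := by linarith
  have hL0 : 0 ≤ L := Real.logb_nonneg (by norm_num) hp1.le
  have hbase : ((8:ℝ)/7) ^ L = (p:ℝ) := Real.rpow_logb (by norm_num) (by norm_num) hp0
  -- constant per variable
  set c : ℝ := 2 ^ N * (1/4 : ℝ) ^ k * (4/3) with hcdef
  have hc0 : 0 ≤ c := by positivity
  -- per-variable tail bound
  have key : ∀ i, μ {ω | 19 * L < (X i ω : ℝ)} ≤ ENNReal.ofReal c := by
    intro i
    have hmeas : MeasurableSet {n : ℕ | 19 * L < (n:ℝ)} := trivial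
    have h1 : μ {ω | 19 * L < (X i ω : ℝ)} = μ.map (X i) {n : ℕ | 19 * L < (n:ℝ)} := by
      rw [Measure.map_apply (hX i) hmeas]; rfl
    rw [h1]
    have hsub : {n : ℕ | 19 * L < (n:ℝ)} ⊆ ⋃ m : ℕ, {k + m} := by
      intro n hn
      have hkn : k ≤ n := Nat.ceil_le.mpr (le_of_lt hn)
      exact Set.mem_iUnion.mpr ⟨n - k, by simp [Nat.add_sub_cancel' hkn]⟩
    calc μ.map (X i) {n : ℕ | 19 * L < (n:ℝ)}
        ≤ μ.map (X i) (⋃ m : ℕ, {k + m}) := measure_mono hsub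
      _ ≤ ∑' m : ℕ, μ.map (X i) {k + m} := measure_iUnion_le _
      _ ≤ ∑' m : ℕ, ENNReal.ofReal (2 ^ N * (1/4 : ℝ) ^ k * (1/4 : ℝ) ^ m) := by
          refine ENNReal.tsum_le_tsum fun m => ?_
          rw [hmap i (k + m)]
          apply ENNReal.ofReal_le_ofReal
          have h2 : ((N.choose (k + m) : ℝ)) ≤ 2 ^ N := by
            exact_mod_cast aux_choose_le_two_pow N (k + m)
          have h3 : (3/4 : ℝ) ^ (N - (k + m)) ≤ 1 :=
            pow_le_one₀ (by norm_num) (by norm_num)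
          have h4 : (0:ℝ) ≤ (1/4 : ℝ) ^ (k + m) := by positivity
          have h5 : (0:ℝ) ≤ ((N.choose (k + m) : ℝ)) * (1/4 : ℝ) ^ (k + m) := by positivity
          calc ((N.choose (k + m) : ℝ)) * (1/4 : ℝ) ^ (k + m) * (3/4 : ℝ) ^ (N - (k + m))
              ≤ ((N.choose (k + m) : ℝ)) * (1/4 : ℝ) ^ (k + m) * 1 :=
                mul_le_mul_of_nonneg_left h3 h5
            _ = ((N.choose (k + m) : ℝ)) * ((1/4 : ℝ) ^ k * (1/4 : ℝ) ^ m) := by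
                rw [pow_add]; ring
            _ ≤ 2 ^ N * ((1/4 : ℝ) ^ k * (1/4 : ℝ) ^ m) :=
                mul_le_mul_of_nonneg_right h2 (by positivity)
            _ = 2 ^ N * (1/4 : ℝ) ^ k * (1/4 : ℝ) ^ m := by ring
      _ = ENNReal.ofReal c := by
          rw [← ENNReal.ofReal_tsum_of_nonneg (fun m => by positivity)
            ((summable_geometric_of_lt_one (by norm_num) (by norm_num)).mul_left _)]
          congr 1
          rw [tsum_mul_left, tsum_geometric_of_lt_one (by norm_num) (by norm_num)]
          norm_num [hcdef]
  -- union bound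
  have hunion : μ {ω | ∃ i : Fin p, 19 * L < (X i ω : ℝ)}
      ≤ ∑ i : Fin p, μ {ω | 19 * L < (X i ω : ℝ)} := by
    have : {ω | ∃ i : Fin p, 19 * L < (X i ω : ℝ)}
        = ⋃ i : Fin p, {ω | 19 * L < (X i ω : ℝ)} := by
      ext ω; simp
    rw [this]
    exact measure_iUnion_fintype_le μ _
  have hsum : (∑ i : Fin p, μ {ω | 19 * L < (X i ω : ℝ)}) ≤ (p : ENNReal) * ENNReal.ofReal c := by
    calc (∑ i : Fin p, μ {ω | 19 * L < (X i ω : ℝ)})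
        ≤ ∑ _i : Fin p, ENNReal.ofReal c := Finset.sum_le_sum fun i _ => key i
      _ = (p : ENNReal) * ENNReal.ofReal c := by
          simp [Finset.sum_const, nsmul_eq_mul]
  refine le_trans (hunion.trans hsum) ?_
  -- convert to reals
  have hcast : (p : ENNReal) * ENNReal.ofReal c = ENNReal.ofReal ((p:ℝ) * c) := by
    rw [ENNReal.ofReal_mul hp0.le, ENNReal.ofReal_natCast]
  rw [hcast]
  apply ENNReal.ofReal_le_ofReal
  -- the real inequality: p * c ≤ (8/3) * p^(-6)
  have hNle : (N : ℝ) ≤ 20 * L + 1 := (Nat.ceil_lt_add_one (by positivity)).le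
  have hkge : 19 * L ≤ (k : ℝ) := Nat.le_ceil _
  -- 2^N ≤ 2 * 2^(20L)
  have h2N : (2:ℝ) ^ N ≤ 2 * (2:ℝ) ^ (20 * L) := by
    have : (2:ℝ) ^ N = (2:ℝ) ^ ((N:ℝ)) := (Real.rpow_natCast 2 N).symm
    rw [this]
    calc (2:ℝ) ^ ((N:ℝ)) ≤ (2:ℝ) ^ (20 * L + 1) :=
          Real.rpow_le_rpow_of_exponent_le one_le_two hNle
      _ = 2 * (2:ℝ) ^ (20 * L) := by
          rw [Real.rpow_add (by norm_num), Real.rpow_one]; ring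
  -- (1/4)^k ≤ (1/4)^(19L)
  have h4k : (1/4 : ℝ) ^ k ≤ (1/4 : ℝ) ^ (19 * L) := by
    have : (1/4 : ℝ) ^ k = (1/4 : ℝ) ^ ((k:ℝ)) := (Real.rpow_natCast _ k).symm
    rw [this]
    exact Real.rpow_le_rpow_of_exponent_ge (by norm_num) (by norm_num) hkge
  -- combine: c ≤ (8/3) * 2^(20L) * (1/4)^(19L)
  have hA0 : (0:ℝ) < (2:ℝ) ^ (20 * L) := Real.rpow_pos_of_pos (by norm_num) _
  have hB0 : (0:ℝ) < (1/4 : ℝ) ^ (19 * L) := Real.rpow_pos_of_pos (by norm_num) _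
  have hc_le : c ≤ (8/3) * ((2:ℝ) ^ (20 * L) * (1/4 : ℝ) ^ (19 * L)) := by
    rw [hcdef]
    have h1 : (2:ℝ) ^ N * (1/4 : ℝ) ^ k ≤ (2 * (2:ℝ) ^ (20 * L)) * (1/4 : ℝ) ^ (19 * L) := by
      apply mul_le_mul h2N h4k (by positivity) (by positivity)
    nlinarith [h1]
  -- 2^(20L) * (1/4)^(19L) = 2^(-18L)
  have h2m2 : (2:ℝ) ^ (-2 : ℝ) = 1/4 := by
    rw [show (-2:ℝ) = ((-2:ℤ):ℝ) by norm_num, Real.rpow_intCast]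
    norm_num
  have hpow : (2:ℝ) ^ (20 * L) * (1/4 : ℝ) ^ (19 * L) = (2:ℝ) ^ (-(18 * L)) := by
    have h14 : (1/4 : ℝ) ^ (19 * L) = (2:ℝ) ^ ((-2) * (19 * L)) := by
      rw [Real.rpow_mul (by norm_num : (0:ℝ) ≤ 2), h2m2]
    rw [h14, ← Real.rpow_add (by norm_num : (0:ℝ) < 2)]
    ring_nf
  -- p^7 ≤ 2^(18L)
  have hp7 : (p:ℝ) ^ 7 ≤ (2:ℝ) ^ (18 * L) := by
    have h1 : ((p:ℝ)) ^ 7 = ((8:ℝ)/7) ^ (L * 7) := by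
      rw [← hbase, ← Real.rpow_natCast (((8:ℝ)/7) ^ L) 7,
        ← Real.rpow_mul (by norm_num : (0:ℝ) ≤ 8/7)]
      norm_num
    have h2 : ((8:ℝ)/7) ^ (L * 7) ≤ (2:ℝ) ^ (18 * L) := by
      rw [show L * 7 = (7:ℝ) * L by ring, Real.rpow_mul (by norm_num : (0:ℝ) ≤ 8/7),
        Real.rpow_mul (by norm_num : (0:ℝ) ≤ 2)]
      apply Real.rpow_le_rpow (by positivity) ?_ hL0
      rw [show ((7:ℝ)) = ((7:ℕ):ℝ) by norm_num, show ((18:ℝ)) = ((18:ℕ):ℝ) by norm_num,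
        Real.rpow_natCast, Real.rpow_natCast]
      norm_num
    rw [h1]; exact h2
  have hp7pos : (0:ℝ) < (p:ℝ) ^ 7 := by positivity
  have htail : (2:ℝ) ^ (-(18 * L)) ≤ ((p:ℝ) ^ 7)⁻¹ := by
    rw [Real.rpow_neg (by norm_num : (0:ℝ) ≤ 2)]
    exact inv_anti₀ hp7pos hp7
  have hfin : c ≤ (8/3) * ((p:ℝ) ^ 7)⁻¹ := by
    calc c ≤ (8/3) * ((2:ℝ) ^ (20 * L) * (1/4 : ℝ) ^ (19 * L)) := hc_le
      _ = (8/3) * (2:ℝ) ^ (-(18 * L)) := by rw [hpow]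
      _ ≤ (8/3) * ((p:ℝ) ^ 7)⁻¹ := by
          exact mul_le_mul_of_nonneg_left htail (by norm_num)
  have hz : ((p:ℝ)) ^ (-6 : ℤ) = ((p:ℝ) ^ 6)⁻¹ := by
    rw [zpow_neg, show ((6:ℤ)) = ((6:ℕ):ℤ) by norm_num, zpow_natCast]
  rw [hz]
  have heq : (p:ℝ) * ((8/3) * ((p:ℝ) ^ 7)⁻¹) = 8/3 * ((p:ℝ) ^ 6)⁻¹ := by
    field_simp
  calc (p:ℝ) * c ≤ (p:ℝ) * ((8/3) * ((p:ℝ) ^ 7)⁻¹) :=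
        mul_le_mul_of_nonneg_left hfin hp0.le
    _ = 8/3 * ((p:ℝ) ^ 6)⁻¹ := heq
end
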